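/- The family of behaviors of deterministic splitters is not closed under product: over the alphabet A = {a,b} (a ≠ b), with L = {(b, aⁿ, baⁿ) : n ∈ ℕ} ⊆ U, the setwise product L·L = {xy : x,y ∈ L} is not the behavior of any deterministic splitter, although L itself is the behavior of a deterministic splitter with finitely many states. -/

import Mathlib

/-- Words over the alphabet `A`, i.e. elements of the free monoid `A*`. -/
abbrev Word (A : Type) := List A

/-- The generating set `G = {(a,ε,a) : a ∈ A} ∪ {(ε,a,a) : a ∈ A}` of the
Shuffling Monoid. -/
def genG (A : Type) : Set (Word A × Word A × Word A) :=
  {g | ∃ a : A, g = ([a], [], [a]) ∨ g = ([], [a], [a])}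

/-- Componentwise product (concatenation) of a list of triples of words. -/
def prodTriple {A : Type} (ls : List (Word A × Word A × Word A)) :
    Word A × Word A × Word A :=
  ((ls.map fun l => l.1).flatten, (ls.map fun l => l.2.1).flatten,
    (ls.map fun l => l.2.2).flatten)

/-- The Shuffling Monoid `U`: the submonoid of `A* × A* × A*` generated by `G`,
described as the set of all products of finite sequences of generators. -/
def shuffleU (A : Type) : Set (Word A × Word A × Word A) :=
  {m | ∃ ls : List (Word A × Word A × Word A), (∀ l ∈ ls, l ∈ genG A) ∧ prodTriple ls = m}

/-- A spliffer (equivalently, splitter) over `A`: a finite automaton whose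
transitions are labeled by elements of `G`. -/
structure Spliffer (A : Type) where
  Q : Type
  finQ : Finite Q
  E : Q → (Word A × Word A × Word A) → Q → Prop
  I : Set Q
  T : Set Q
  labels_mem : ∀ {q l q'}, E q l q' → l ∈ genG A

/-- Paths in a spliffer, recording the sequence of labels. -/
inductive Spliffer.Path {A : Type} (S : Spliffer A) :
    S.Q → List (Word A × Word A × Word A) → S.Q → Prop
  | nil (q : S.Q) : Spliffer.Path S q [] q
  | cons {q q' q'' : S.Q} {l : Word A × Word A × Word A}
      {ls : List (Word A × Word A × Word A)} :
      S.E q l q' → Spliffer.Path S q' ls q'' → Spliffer.Path S q (l :: ls) q''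

/-- The behavior `|S|` of a spliffer: products of the label sequences of all
successful runs. -/
def Spliffer.behavior {A : Type} (S : Spliffer A) : Set (Word A × Word A × Word A) :=
  {m | ∃ q ∈ S.I, ∃ q' ∈ S.T, ∃ ls, S.Path q ls q' ∧ prodTriple ls = m}

/-- A splitter is deterministic if it has a single initial state, for every state
and input letter there is at most one outgoing transition reading that letter,
and all transitions leaving a given state write to the same tape. -/
def Spliffer.Deterministic {A : Type} (S : Spliffer A) : Prop :=
  (∃! i, i ∈ S.I) ∧
  (∀ ⦃q l₁ q₁ l₂ q₂⦄, S.E q l₁ q₁ → S.E q l₂ q₂ → l₁.2.2 = l₂.2.2 → l₁ = l₂ ∧ q₁ = q₂) ∧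
  (∀ ⦃q l₁ q₁ l₂ q₂⦄, S.E q l₁ q₁ → S.E q l₂ q₂ →
    (l₁.1 = [] ∧ l₂.1 = []) ∨ (l₁.2.1 = [] ∧ l₂.2.1 = []))


/-! ### Auxiliary material -/

lemma prodTriple_cons {A : Type} (l : Word A × Word A × Word A)
    (ls : List (Word A × Word A × Word A)) :
    prodTriple (l :: ls) =
      (l.1 ++ (prodTriple ls).1, l.2.1 ++ (prodTriple ls).2.1,
        l.2.2 ++ (prodTriple ls).2.2) := by
  simp [prodTriple]

lemma prodTriple_rep {A : Type} (a : A) (n : ℕ) :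
    prodTriple (List.replicate n (([], [a], [a]) : Word A × Word A × Word A)) =
      ([], List.replicate n a, List.replicate n a) := by
  induction n with
  | zero => simp [prodTriple]
  | succ n ih =>
      rw [List.replicate_succ, prodTriple_cons, ih]
      simp [List.replicate_succ]

lemma path_labels {A : Type} {S : Spliffer A} :
    ∀ {q ls q'}, S.Path q ls q' → ∀ l ∈ ls, l ∈ genG A := by
  intro q ls q' h
  induction h with
  | nil => simp
  | cons e _ ih =>
      intro l hl
      rcases List.mem_cons.1 hl with rfl | hl
      · exact S.labels_mem e
      · exact ih l hl

lemma third_len {A : Type} :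
    ∀ {ls : List (Word A × Word A × Word A)}, (∀ l ∈ ls, l ∈ genG A) →
      ((prodTriple ls).2.2).length = ls.length := by
  intro ls
  induction ls with
  | nil => simp [prodTriple]
  | cons l ls ih =>
      intro h
      rw [prodTriple_cons]
      have h1 := ih (fun l hl => h l (List.mem_cons_of_mem _ hl))
      obtain ⟨c, hc | hc⟩ := h l List.mem_cons_self <;>
        subst hc <;> simp [h1]

/-- The one-state (well, two-state) deterministic splitter for `L`. -/
def Sone {A : Type} (a b : A) : Spliffer A where
  Q := Bool
  finQ := inferInstance
  E q l q' := (q = false ∧ l = ([b], [], [b]) ∧ q' = true) ∨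
              (q = true ∧ l = ([], [a], [a]) ∧ q' = true)
  I := {false}
  T := {true}
  labels_mem := by
    rintro q l q' (⟨_, rfl, _⟩ | ⟨_, rfl, _⟩)
    · exact ⟨b, Or.inl rfl⟩
    · exact ⟨a, Or.inr rfl⟩

lemma Sone_path_from_true {A : Type} {a b : A} :
    ∀ {q ls q'}, (Sone a b).Path q ls q' → q = true →
      q' = true ∧ ls = List.replicate ls.length (([], [a], [a]) : Word A × Word A × Word A) := by
  intro q ls q' h
  induction h with
  | nil => intro hq; exact ⟨hq, rfl⟩
  | cons e p ih =>
      intro hq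
      rcases e with ⟨hq', _, _⟩ | ⟨_, rfl, h1⟩
      · simp [hq'] at hq
      · subst h1
        obtain ⟨h2, h3⟩ := ih rfl
        refine ⟨h2, ?_⟩
        simp only [List.length_cons, List.replicate_succ]
        exact congrArg _ h3

lemma Sone_path_loop {A : Type} (a b : A) (n : ℕ) :
    (Sone a b).Path true (List.replicate n (([], [a], [a]) : Word A × Word A × Word A)) true := by
  induction n with
  | zero => exact .nil _
  | succ n ih =>
      rw [List.replicate_succ]
      exact .cons (Or.inr ⟨rfl, rfl, rfl⟩) ih

/-- The set `L = {(b, aⁿ, baⁿ) : n ∈ ℕ}`. -/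
def setLb {A : Type} (a b : A) : Set (Word A × Word A × Word A) :=
  {x | ∃ n : ℕ, x = ([b], List.replicate n a, b :: List.replicate n a)}

/-- over `A = {a,b}`, with `L = {(b, aⁿ, baⁿ) : n ∈ ℕ}`, the product
`L·L` is not the behavior of any deterministic splitter, although `L` is. -/
theorem drat_not_closed_under_product {A : Type} (a b : A) (hab : a ≠ b)
    (hA : ∀ x : A, x = a ∨ x = b) :
    (∃ S : Spliffer A, S.Deterministic ∧ S.behavior = setLb a b) ∧
    ¬ ∃ S : Spliffer A, S.Deterministic ∧ S.behavior =
        {m : Word A × Word A × Word A | ∃ x ∈ setLb a b, ∃ y ∈ setLb a b,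
          m = (x.1 ++ y.1, x.2.1 ++ y.2.1, x.2.2 ++ y.2.2)} := by
  constructor
  · -- L is the behavior of a deterministic splitter
    refine ⟨Sone a b, ⟨⟨false, rfl, fun y hy => hy⟩, ?_, ?_⟩, ?_⟩
    · rintro q l₁ q₁ l₂ q₂ h1 h2 _
      rcases h1 with ⟨rfl, rfl, rfl⟩ | ⟨rfl, rfl, rfl⟩ <;>
        rcases h2 with ⟨h, rfl, rfl⟩ | ⟨h, rfl, rfl⟩ <;> simp_all <;> rfl
    · rintro q l₁ q₁ l₂ q₂ h1 h2
      rcases h1 with ⟨rfl, rfl, rfl⟩ | ⟨rfl, rfl, rfl⟩ <;>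
        rcases h2 with ⟨h, rfl, rfl⟩ | ⟨h, rfl, rfl⟩ <;> simp_all
    · ext m
      constructor
      · rintro ⟨i, hi, t, ht, ls, hp, rfl⟩
        have hi' : i = false := hi
        have ht' : t = true := ht
        subst hi'; subst ht'
        match hp with
        | .cons e p =>
            rcases e with ⟨_, rfl, h1⟩ | ⟨hq, _, _⟩
            · subst h1
              obtain ⟨_, hls⟩ := Sone_path_from_true p rfl
              rw [hls, prodTriple_cons, prodTriple_rep]
              simp only [List.nil_append, List.append_nil, List.singleton_append]
              exact ⟨_, rfl⟩
            · simp at hq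
      · rintro ⟨n, rfl⟩
        refine ⟨false, rfl, true, rfl,
          ([b], [], [b]) :: List.replicate n ([], [a], [a]),
          .cons (Or.inl ⟨rfl, rfl, rfl⟩) (Sone_path_loop a b n), ?_⟩
        rw [prodTriple_cons, prodTriple_rep]
        simp
  · -- L·L is not the behavior of any deterministic splitter
    rintro ⟨S, ⟨⟨i0, hi0, huniq⟩, hdet2, hdet3⟩, hbeh⟩
    have h1 : (([b, b], [], [b, b]) : Word A × Word A × Word A) ∈ S.behavior := by
      rw [hbeh]
      exact ⟨([b], [], [b]), ⟨0, by simp⟩, ([b], [], [b]), ⟨0, by simp⟩, by simp⟩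
    have h2 : (([b, b], [a], [b, a, b]) : Word A × Word A × Word A) ∈ S.behavior := by
      rw [hbeh]
      exact ⟨([b], [a], [b, a]), ⟨1, by simp⟩, ([b], [], [b]), ⟨0, by simp⟩, by simp⟩
    obtain ⟨i1, hi1, t1, ht1, ls1, hp1, hpr1⟩ := h1
    obtain ⟨i2, hi2, t2, ht2, ls2, hp2, hpr2⟩ := h2
    -- structure of the run for (bb, ε, bb)
    have hlen1 : ls1.length = 2 := by
      have := third_len (path_labels hp1)
      rw [hpr1] at this
      simpa using this.symm
    obtain ⟨l1, l2, rfl⟩ := List.length_eq_two.1 hlen1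
    have hg1 := path_labels hp1
    have e1a : l1.2.1 ++ l2.2.1 = [] := by
      have := congrArg (fun x => x.2.1) hpr1
      simpa [prodTriple] using this
    have e1c : l1.2.2 ++ l2.2.2 = [b, b] := by
      have := congrArg (fun x => x.2.2) hpr1
      simpa [prodTriple] using this
    have hl1 : l1 = ([b], [], [b]) := by
      obtain ⟨c, hc | hc⟩ := hg1 l1 (by simp)
      · subst hc
        simp only [] at e1c
        have : c = b := by
          have := congrArg (fun x => x.head?) e1c
          simpa using this
        subst this; rfl
      · subst hc; simp at e1a
    have hl2 : l2 = ([b], [], [b]) := by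
      obtain ⟨c, hc | hc⟩ := hg1 l2 (by simp)
      · subst hc
        rw [hl1] at e1c
        simp at e1c
        subst e1c; rfl
      · subst hc; simp at e1a
    -- structure of the run for (bb, a, bab)
    have hlen2 : ls2.length = 3 := by
      have := third_len (path_labels hp2)
      rw [hpr2] at this
      simpa using this.symm
    obtain ⟨k1, k2, k3, rfl⟩ := List.length_eq_three.1 hlen2
    have hg2 := path_labels hp2
    have e2a : k1.1 ++ (k2.1 ++ k3.1) = [b, b] := by
      have := congrArg (fun x => x.1) hpr2
      simpa [prodTriple] using this
    have e2c : k1.2.2 ++ (k2.2.2 ++ k3.2.2) = [b, a, b] := by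
      have := congrArg (fun x => x.2.2) hpr2
      simpa [prodTriple] using this
    have hk1c : k1.2.2 = [b] := by
      obtain ⟨c, hc | hc⟩ := hg2 k1 (by simp) <;> subst hc <;>
        · simp only [] at e2c ⊢
          have : c = b := by
            have := congrArg (fun x => x.head?) e2c
            simpa using this
          simp [this]
    have hk2 : k2 = ([], [a], [a]) := by
      have hk2c : k2.2.2 = [a] := by
        obtain ⟨c, hc | hc⟩ := hg2 k2 (by simp) <;> subst hc <;>
          · simp only [] at e2c ⊢
            rw [hk1c] at e2c
            have : c = a := by
              have := congrArg (fun x => x.head?.bind (fun _ => x.tail.head?)) e2c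
              simpa using this
            simp [this]
      obtain ⟨c, hc | hc⟩ := hg2 k2 (by simp)
      · exfalso
        have hca : c = a := by rw [hc] at hk2c; simpa using hk2c
        have hk21 : k2.1 = [a] := by rw [hc, hca]
        rw [hk21] at e2a
        have : a ∈ k1.1 ++ ([a] ++ k3.1) := by simp
        rw [e2a] at this
        simp at this
        exact hab this
      · have hca : c = a := by rw [hc] at hk2c; simpa using hk2c
        rw [hc, hca]
    -- now look at the two runs
    have hii1 : i1 = i0 := huniq i1 hi1
    have hii2 : i2 = i0 := huniq i2 hi2
    subst hii1; subst hii2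
    cases hp1 with
    | cons f1 hp1' =>
      cases hp1' with
      | cons f2 hp1'' =>
        cases hp2 with
        | cons g1 hp2' =>
          cases hp2' with
          | cons g2 hp2'' =>
            have hthird : l1.2.2 = k1.2.2 := by rw [hl1, hk1c]
            obtain ⟨-, hstate⟩ := hdet2 f1 g1 hthird
            subst hstate
            have := hdet3 f2 g2
            rw [hl2, hk2] at this
            simp at this
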